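/- There exists a holomorphic function on the bidisc $\mathbf{D}^2$ that belongs to the natural Bloch space $\mathcal{B}_{nat}(\mathbf{D}^2)$ but not to the invariant Bloch space $\mathcal{B}_{inv}(\mathbf{D}^2)$; i.e., $\mathcal{B}_{inv}(\mathbf{D}^2) \subsetneq \mathcal{B}_{nat}(\mathbf{D}^2)$. -/

import Mathlib

open Metric Set

noncomputable def Fct : ℂ × ℂ → ℂ := fun p => p.1 * -Complex.log (1 - p.2)

lemma mem_slit' {w : ℂ} (hw : ‖w‖ < 1) : (1 - w) ∈ Complex.slitPlane := by
  left
  simp only [Complex.sub_re, Complex.one_re]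
  have h := abs_le.mp (Complex.abs_re_le_norm w)
  linarith [h.2]

lemma hasF' {p : ℂ × ℂ} (hw : ‖p.2‖ < 1) :
    HasFDerivAt Fct
      (p.1 • (((1 : ℂ →L[ℂ] ℂ).smulRight (1 - p.2)⁻¹).comp (ContinuousLinearMap.snd ℂ ℂ ℂ))
        + (-Complex.log (1 - p.2)) • ContinuousLinearMap.fst ℂ ℂ ℂ) p := by
  have h1 : HasFDerivAt (fun q : ℂ × ℂ => q.1) (ContinuousLinearMap.fst ℂ ℂ ℂ) p :=
    hasFDerivAt_fst
  have hg : HasDerivAt (fun w : ℂ => -Complex.log (1 - w)) (1 - p.2)⁻¹ p.2 := by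
    have hs : HasDerivAt (fun w : ℂ => 1 - w) (-1 : ℂ) p.2 := by
      exact (hasDerivAt_id' p.2).const_sub (1:ℂ)
    have hl : HasDerivAt Complex.log (1 - p.2)⁻¹ (1 - p.2) :=
      Complex.hasDerivAt_log (mem_slit' hw)
    exact (hl.comp p.2 hs).neg.congr_deriv (by ring)
  have h2 : HasFDerivAt (fun q : ℂ × ℂ => -Complex.log (1 - q.2))
      (((1 : ℂ →L[ℂ] ℂ).smulRight (1 - p.2)⁻¹).comp (ContinuousLinearMap.snd ℂ ℂ ℂ)) p :=
    hg.hasFDerivAt.comp p hasFDerivAt_snd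
  exact h1.mul h2

lemma deriv1' {p : ℂ × ℂ} (hw : ‖p.2‖ < 1) :
    fderiv ℂ Fct p (1, 0) = -Complex.log (1 - p.2) := by
  rw [(hasF' hw).fderiv]; simp

lemma deriv2' {p : ℂ × ℂ} (hw : ‖p.2‖ < 1) :
    fderiv ℂ Fct p (0, 1) = p.1 * (1 - p.2)⁻¹ := by
  rw [(hasF' hw).fderiv]; simp

lemma norm_log_le' (z : ℂ) : ‖Complex.log z‖ ≤ |Real.log ‖z‖| + Real.pi := by
  have h := Complex.norm_le_abs_re_add_abs_im (Complex.log z)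
  rw [Complex.log_re, Complex.log_im] at h
  calc ‖Complex.log z‖ ≤ |Real.log ‖z‖| + |z.arg| := h
    _ ≤ |Real.log ‖z‖| + Real.pi := by
        gcongr; exact Complex.abs_arg_le_pi z

lemma natBound {p : ℂ × ℂ} (hz : ‖p.1‖ < 1) (hw : ‖p.2‖ < 1) :
    (1 - (max ‖p.1‖ ‖p.2‖) ^ 2) * (‖-Complex.log (1 - p.2)‖ + ‖p.1 * (1 - p.2)⁻¹‖)
      ≤ 2 * Real.log 2 + 2 * Real.pi + 4 := by
  set a := ‖p.2‖ with ha
  set m := max ‖p.1‖ ‖p.2‖ with hmdef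
  set s := 1 - a with hsdef
  have ha0 : 0 ≤ a := norm_nonneg _
  have hs0 : 0 < s := by simp [hsdef]; linarith
  have hs1 : s ≤ 1 := by simp [hsdef]; linarith
  have htlb : s ≤ ‖1 - p.2‖ := by
    have := norm_sub_norm_le (1 : ℂ) p.2
    simpa [hsdef] using this
  have htub : ‖1 - p.2‖ ≤ 2 := by
    have := norm_sub_le (1 : ℂ) p.2
    rw [norm_one] at this
    linarith
  have ht0 : 0 < ‖1 - p.2‖ := lt_of_lt_of_le hs0 htlb
  -- bound on |log ‖1-w‖|
  have hlog2 : (0:ℝ) ≤ Real.log 2 := Real.log_nonneg (by norm_num)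
  have hlogs : Real.log s ≤ 0 := Real.log_nonpos (le_of_lt hs0) hs1
  have habs : |Real.log ‖1 - p.2‖| ≤ Real.log 2 - Real.log s := by
    rcases abs_cases (Real.log ‖1 - p.2‖) with ⟨he, _⟩ | ⟨he, _⟩
    · rw [he]
      have : Real.log ‖1 - p.2‖ ≤ Real.log 2 := Real.log_le_log ht0 htub
      linarith
    · rw [he]
      have : Real.log s ≤ Real.log ‖1 - p.2‖ := Real.log_le_log hs0 htlb
      linarith
  have hA : ‖-Complex.log (1 - p.2)‖ ≤ Real.log 2 - Real.log s + Real.pi := by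
    rw [norm_neg]
    have := norm_log_le' (1 - p.2)
    linarith
  have hB : ‖p.1 * (1 - p.2)⁻¹‖ ≤ 1 / s := by
    rw [norm_mul, norm_inv]
    have h1 : ‖(1 - p.2)‖⁻¹ ≤ 1 / s := by
      rw [one_div]
      exact inv_anti₀ hs0 htlb
    have h2 : ‖p.1‖ * ‖(1 - p.2)‖⁻¹ ≤ 1 * (1/s) := by
      apply mul_le_mul (le_of_lt hz) h1 (by positivity) (by norm_num)
    linarith
  have hma : a ≤ m := le_max_right _ _
  have hm0 : 0 ≤ m := le_trans ha0 hma
  have hm1 : m < 1 := max_lt hz hw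
  have h1m : 1 - m ^ 2 ≤ 2 * s := by nlinarith
  have h1m0 : 0 ≤ 1 - m ^ 2 := by nlinarith
  have hA0 : 0 ≤ ‖-Complex.log (1 - p.2)‖ := norm_nonneg _
  have hB0 : 0 ≤ ‖p.1 * (1 - p.2)⁻¹‖ := norm_nonneg _
  -- s * (-log s) ≤ 1 - s
  have hsl : s * (-Real.log s) ≤ 1 - s := by
    have h := Real.log_le_sub_one_of_pos (show (0:ℝ) < 1/s by positivity)
    rw [Real.log_div one_ne_zero (ne_of_gt hs0), Real.log_one] at h
    have := mul_le_mul_of_nonneg_left h (le_of_lt hs0)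
    calc s * (-Real.log s) = s * (0 - Real.log s) := by ring
      _ ≤ s * (1/s - 1) := this
      _ = 1 - s := by field_simp
  have key1 : s * ‖-Complex.log (1 - p.2)‖ ≤ Real.log 2 + 1 + Real.pi := by
    have h := mul_le_mul_of_nonneg_left hA (le_of_lt hs0)
    have hpi : 0 ≤ Real.pi := Real.pi_pos.le
    nlinarith
  have key2 : s * ‖p.1 * (1 - p.2)⁻¹‖ ≤ 1 := by
    have h := mul_le_mul_of_nonneg_left hB (le_of_lt hs0)
    calc s * ‖p.1 * (1 - p.2)⁻¹‖ ≤ s * (1/s) := h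
      _ = 1 := by field_simp
  calc (1 - m ^ 2) * (‖-Complex.log (1 - p.2)‖ + ‖p.1 * (1 - p.2)⁻¹‖)
      ≤ 2 * s * (‖-Complex.log (1 - p.2)‖ + ‖p.1 * (1 - p.2)⁻¹‖) :=
        mul_le_mul_of_nonneg_right h1m (by positivity)
    _ = 2 * (s * ‖-Complex.log (1 - p.2)‖) + 2 * (s * ‖p.1 * (1 - p.2)⁻¹‖) := by ring
    _ ≤ 2 * (Real.log 2 + 1 + Real.pi) + 2 * 1 := by
        gcongr
    _ = 2 * Real.log 2 + 2 * Real.pi + 4 := by ring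

theorem inv_bloch_proper_subset_nat_bloch_bidisc :
    ∃ f : ℂ × ℂ → ℂ, DifferentiableOn ℂ f (ball (0 : ℂ × ℂ) 1) ∧
      (∃ M : ℝ, ∀ x ∈ ball (0 : ℂ × ℂ) 1,
        (1 - (max ‖x.1‖ ‖x.2‖) ^ 2) *
          (‖fderiv ℂ f x (1, 0)‖ + ‖fderiv ℂ f x (0, 1)‖) ≤ M) ∧
      (∀ M : ℝ, ∃ x ∈ ball (0 : ℂ × ℂ) 1,
        M < (1 - ‖x.1‖ ^ 2) * ‖fderiv ℂ f x (1, 0)‖ +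
            (1 - ‖x.2‖ ^ 2) * ‖fderiv ℂ f x (0, 1)‖) := by
  refine ⟨Fct, ?_, ?_, ?_⟩
  · intro x hx
    rw [mem_ball, dist_zero_right, Prod.norm_def] at hx
    exact ((hasF' (lt_of_le_of_lt (le_max_right _ _) hx)).differentiableAt).differentiableWithinAt
  · refine ⟨2 * Real.log 2 + 2 * Real.pi + 4, ?_⟩
    intro x hx
    rw [mem_ball, dist_zero_right, Prod.norm_def] at hx
    have hz := lt_of_le_of_lt (le_max_left ‖x.1‖ ‖x.2‖) hx
    have hw := lt_of_le_of_lt (le_max_right ‖x.1‖ ‖x.2‖) hx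
    rw [deriv1' hw, deriv2' hw]
    exact natBound hz hw
  · intro M
    set e := Real.exp (-(|M| + 1)) with hedef
    have he0 : 0 < e := Real.exp_pos _
    have he1 : e < 1 := Real.exp_lt_one_iff.mpr (by have := abs_nonneg M; linarith)
    set t : ℝ := 1 - e with htdef
    have ht0 : 0 < t := by linarith
    have ht1 : t < 1 := by linarith
    refine ⟨((0:ℂ), (t:ℂ)), ?_, ?_⟩
    · rw [mem_ball, dist_zero_right, Prod.norm_def]
      simp only [Complex.norm_real, norm_zero]
      rw [max_eq_right (by rw [Real.norm_eq_abs]; positivity), Real.norm_eq_abs,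
        abs_of_pos ht0]
      exact ht1
    · have hw : ‖((t:ℝ) : ℂ)‖ < 1 := by
        rw [Complex.norm_real, Real.norm_eq_abs, abs_of_pos ht0]; exact ht1
      have hd1 := deriv1' (p := ((0:ℂ), (t:ℂ))) hw
      have hd2 := deriv2' (p := ((0:ℂ), (t:ℂ))) hw
      rw [hd1, hd2]
      have hcast : (1 : ℂ) - ((t:ℝ) : ℂ) = ((e : ℝ) : ℂ) := by
        push_cast [htdef]; ring
      rw [hcast]
      have hlog : Complex.log ((e : ℝ) : ℂ) = ((Real.log e : ℝ) : ℂ) :=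
        (Complex.ofReal_log he0.le).symm
      rw [hlog]
      have : Real.log e = -(|M| + 1) := by rw [hedef, Real.log_exp]
      rw [this]
      simp only [zero_mul, norm_zero, mul_zero, add_zero, norm_neg, Complex.norm_real]
      rw [Real.norm_eq_abs, abs_of_nonneg (show (0:ℝ) ≤ |M| + 1 by positivity)]
      have h1 := le_abs_self M
      have h2 : (1:ℝ) - 0 ^ 2 = 1 := by norm_num
      rw [h2, one_mul]
      linarith
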